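/- For a smooth manifold M, every ℝ-algebra homomorphism φ : C^∞(M) → ℝ is evaluation at some point x ∈ M (Milnor's exercise), provided M is compact (or more generally, assuming φ is nonzero and M admits a proper smooth function). -/

import Mathlib

open scoped Manifold

/-- Milnor's exercise: on a compact smooth manifold `M`, every nonzero `ℝ`-algebra
homomorphism `φ : C^∞(M) → ℝ` is evaluation at some point `x ∈ M`. -/
theorem milnor_exercise
    {E : Type*} [NormedAddCommGroup E] [NormedSpace ℝ E]
    {H : Type*} [TopologicalSpace H] (I : ModelWithCorners ℝ E H)
    (M : Type*) [TopologicalSpace M] [ChartedSpace H M]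
    [IsManifold I (⊤ : ℕ∞) M] [CompactSpace M]
    (φ : C^(⊤ : ℕ∞)⟮I, M; ℝ⟯ →ₐ[ℝ] ℝ) (hφ : ∃ f, φ f ≠ 0) :
    ∃ x : M, ∀ f : C^(⊤ : ℕ∞)⟮I, M; ℝ⟯, φ f = f x := by
  by_contra hcon
  push_neg at hcon
  have key : ∀ x : M, ∃ g : C^(⊤ : ℕ∞)⟮I, M; ℝ⟯,
      φ g = 0 ∧ 0 < g x ∧ ∀ y, 0 ≤ g y := by
    intro x
    obtain ⟨f, hf⟩ := hcon x
    set c : C^(⊤ : ℕ∞)⟮I, M; ℝ⟯ := algebraMap ℝ _ (φ f) with hc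
    have hev : ∀ y : M, ((f - c) ^ 2) y = (f y - φ f) ^ 2 := by
      intro y
      have h1 := map_pow (ContMDiffMap.evalRingHom y) (f - c) 2
      have h2 := map_sub (ContMDiffMap.evalRingHom y) f c
      have hcc : c y = φ f := rfl
      simp only [ContMDiffMap.evalRingHom, RingHom.coe_comp, Function.comp_apply,
        ContMDiffMap.coeFnRingHom_apply, Pi.evalRingHom_apply] at h1 h2
      rw [h1, h2, hcc]
    refine ⟨(f - c) ^ 2, ?_, ?_, ?_⟩
    · simp [hc, map_pow, map_sub, AlgHom.commutes]
    · rw [hev x]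
      have hne : f x - φ f ≠ 0 := sub_ne_zero.2 fun h => hf h.symm
      positivity

    · intro y; rw [hev y]; positivity
  choose g hg0 hgpos hgnn using key
  obtain ⟨t, ht⟩ := IsCompact.elim_finite_subcover isCompact_univ
    (fun x : M => {y | 0 < g x y})
    (fun x => isOpen_lt continuous_const (g x).contMDiff.continuous)
    (fun y _ => Set.mem_iUnion.2 ⟨y, hgpos y⟩)
  set h : C^(⊤ : ℕ∞)⟮I, M; ℝ⟯ := ∑ i ∈ t, g i with hh
  have hhy : ∀ y, h y = ∑ i ∈ t, g i y := by
    intro y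
    exact map_sum (ContMDiffMap.evalRingHom y) g t
  have hpos : ∀ y, 0 < h y := by
    intro y
    obtain ⟨i, hi, hyi⟩ := Set.mem_iUnion₂.1 (ht (Set.mem_univ y))
    rw [hhy]
    exact Finset.sum_pos' (fun j _ => hgnn j y) ⟨i, hi, hyi⟩
  have hφh : φ h = 0 := by
    rw [hh, map_sum]
    exact Finset.sum_eq_zero fun i _ => hg0 i
  have hk : ContMDiff I 𝓘(ℝ, ℝ) ((⊤ : ℕ∞) : WithTop ℕ∞) (fun y => (h y)⁻¹) :=
    fun y => (contMDiffAt_inv₀ (I := 𝓘(ℝ, ℝ)) (hpos y).ne').comp y (h.contMDiff y)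
  set k : C^(⊤ : ℕ∞)⟮I, M; ℝ⟯ := ⟨fun y => (h y)⁻¹, hk⟩ with hkdef
  have hone : h * k = 1 := by
    ext y
    have : (h * k) y = h y * (h y)⁻¹ := rfl
    rw [this, mul_inv_cancel₀ (hpos y).ne']
    rfl
  have : (1 : ℝ) = 0 := by
    have := congrArg φ hone
    rw [map_mul, hφh, zero_mul, map_one] at this
    exact this.symm
  exact one_ne_zero this
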